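/- The monoid M_3(Z_max) of 3×3 matrices over the tropical integers is not finitely generated. -/

import Mathlib

noncomputable instance : LinearOrderedAddCommMonoidWithTop (WithBot ℤ)ᵒᵈ where
  __ : AddCommMonoid (WithBot ℤ)ᵒᵈ := inferInstance
  __ : LinearOrder (WithBot ℤ)ᵒᵈ := inferInstance
  __ : IsOrderedAddMonoid (WithBot ℤ)ᵒᵈ := inferInstance
  le_top a := bot_le (α := WithBot ℤ) (a := OrderDual.ofDual a)
  top_add' a := WithBot.bot_add (OrderDual.ofDual a)
  isAddLeftRegular_of_ne_top a ha b c h :=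
    WithBot.add_left_cancel (x := OrderDual.ofDual a) (y := OrderDual.ofDual b)
      (z := OrderDual.ofDual c) ha h

/-- The tropical integers `ℤ_max = ℤ ∪ {-∞}` with addition `max` and
multiplication `+`. -/
abbrev Zmax := Tropical (WithBot ℤ)ᵒᵈ

/-- The element of `ℤ_max` corresponding to the integer `z`. -/
noncomputable def tz (z : ℤ) : Zmax := Tropical.trop (OrderDual.toDual (z : WithBot ℤ))


open Tropical Finset

abbrev M3 := Matrix (Fin 3) (Fin 3) Zmax

lemma tz_ne_zero (a : ℤ) : tz a ≠ 0 := by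
  intro h
  have := congrArg Tropical.untrop h
  rw [Tropical.untrop_zero] at this
  exact (WithBot.coe_ne_bot (a := a)) this

lemma tz_injective : Function.Injective tz := by
  intro a b h
  have h2 := congrArg Tropical.untrop h
  have h3 : ((a : WithBot ℤ)) = ((b : WithBot ℤ)) := h2
  exact_mod_cast h3

lemma tz_mul (a b : ℤ) : tz a * tz b = tz (a + b) := by
  apply Tropical.untrop_injective
  rw [Tropical.untrop_mul]
  show OrderDual.toDual (a : WithBot ℤ) + OrderDual.toDual (b : WithBot ℤ)
      = OrderDual.toDual ((a + b : ℤ) : WithBot ℤ)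
  rw [WithBot.coe_add]; rfl

lemma zmax_eq_zero_or_tz (x : Zmax) : x = 0 ∨ ∃ a : ℤ, x = tz a := by
  rcases h : (OrderDual.ofDual (Tropical.untrop x) : WithBot ℤ) with _ | a
  · left
    apply Tropical.untrop_injective
    rw [Tropical.untrop_zero]
    exact h
  · right
    refine ⟨a, Tropical.untrop_injective ?_⟩
    show Tropical.untrop x = OrderDual.toDual ((a : WithBot ℤ))
    exact_mod_cast congrArg OrderDual.toDual h

lemma zmax_mul_eq_zero {x y : Zmax} : x * y = 0 ↔ x = 0 ∨ y = 0 := by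
  constructor
  · intro h
    have h1 := congrArg Tropical.untrop h
    rw [Tropical.untrop_mul, Tropical.untrop_zero] at h1
    have h2 : (OrderDual.ofDual (Tropical.untrop x) : WithBot ℤ) + OrderDual.ofDual (Tropical.untrop y) = ⊥ := h1
    rcases WithBot.add_eq_bot.mp h2 with h3 | h3
    · left; apply Tropical.untrop_injective; rw [Tropical.untrop_zero]; exact h3
    · right; apply Tropical.untrop_injective; rw [Tropical.untrop_zero]; exact h3
  · rintro (rfl | rfl) <;> simp

lemma zmax_add_eq_zero {x y : Zmax} : x + y = 0 ↔ x = 0 ∧ y = 0 := by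
  constructor
  · intro h
    have h1 := congrArg Tropical.untrop h
    rw [Tropical.untrop_add, Tropical.untrop_zero] at h1
    have h2 := inf_eq_top_iff.mp h1
    exact ⟨Tropical.untrop_injective (by rw [Tropical.untrop_zero]; exact h2.1),
           Tropical.untrop_injective (by rw [Tropical.untrop_zero]; exact h2.2)⟩
  · rintro ⟨rfl, rfl⟩; simp

lemma zmax_one_ne_zero : (1 : Zmax) ≠ 0 := by
  intro h
  have := congrArg Tropical.untrop h
  rw [Tropical.untrop_one, Tropical.untrop_zero] at this
  have : ((0:ℤ) : WithBot ℤ) = ⊥ := this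
  simp at this

lemma tz_zero_eq_one : tz 0 = 1 := by
  apply Tropical.untrop_injective
  rw [Tropical.untrop_one]
  rfl

/-- generalized permutation matrix -/
noncomputable def GPM (e : Equiv.Perm (Fin 3)) (d : Fin 3 → ℤ) : M3 :=
  fun i j => if j = e i then tz (d i) else 0

def IsGP (U : M3) : Prop := ∃ e d, U = GPM e d

def IsC (Z : M3) : Prop := ∃ π : Equiv.Perm (Fin 3), ∀ i j, (Z i j = 0 ↔ j = π i)

noncomputable def Bt (t : ℤ) : M3 :=
  fun i j => if j = i then tz (-t) else if j = i + 1 then tz 0 else 0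

lemma GPM_mul (e : Equiv.Perm (Fin 3)) (d : Fin 3 → ℤ) (A : M3) (i j : Fin 3) :
    (GPM e d * A) i j = tz (d i) * A (e i) j := by
  rw [Matrix.mul_apply]
  have : ∀ k, GPM e d i k * A k j = if k = e i then tz (d i) * A k j else 0 := by
    intro k
    by_cases h : k = e i <;> simp [GPM, h]
  simp only [this]
  rw [Finset.sum_ite_eq' Finset.univ (e i) (fun k => tz (d i) * A k j)]
  simp

lemma mul_GPM (A : M3) (e : Equiv.Perm (Fin 3)) (d : Fin 3 → ℤ) (i j : Fin 3) :
    (A * GPM e d) i j = A i (e.symm j) * tz (d (e.symm j)) := by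
  rw [Matrix.mul_apply]
  have : ∀ k, A i k * GPM e d k j = if k = e.symm j then A i k * tz (d k) else 0 := by
    intro k
    by_cases h : j = e k
    · have hk : k = e.symm j := by rw [h]; simp
      simp [GPM, if_pos h, hk]
    · have hk : ¬ (k = e.symm j) := by
        intro hk; apply h; rw [hk]; simp
      simp [GPM, if_neg h, hk]
  simp only [this]
  rw [Finset.sum_ite_eq' Finset.univ (e.symm j) (fun k => A i k * tz (d k))]
  simp

lemma GPM_mul_GPM (e f : Equiv.Perm (Fin 3)) (d c : Fin 3 → ℤ) :
    GPM e d * GPM f c = GPM (e.trans f) (fun i => d i + c (e i)) := by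
  funext i j
  rw [GPM_mul]
  by_cases h : j = f (e i)
  · simp [GPM, h, tz_mul]
  · simp [GPM, h, Equiv.trans]

lemma GPM_refl_zero : GPM (Equiv.refl _) (fun _ => 0) = (1 : M3) := by
  funext i j
  by_cases h : j = i
  · simp [GPM, h, tz_zero_eq_one, Matrix.one_apply]
  · simp [GPM, h, Matrix.one_apply, Ne.symm h]

lemma IsGP_one : IsGP (1 : M3) := ⟨_, _, GPM_refl_zero.symm⟩

lemma IsGP_mul {U V : M3} (hU : IsGP U) (hV : IsGP V) : IsGP (U * V) := by
  obtain ⟨e, d, rfl⟩ := hU; obtain ⟨f, c, rfl⟩ := hV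
  exact ⟨_, _, GPM_mul_GPM e f d c⟩

lemma GPM_inv (e : Equiv.Perm (Fin 3)) (d : Fin 3 → ℤ) :
    GPM e d * GPM e.symm (fun j => -(d (e.symm j))) = 1 ∧
    GPM e.symm (fun j => -(d (e.symm j))) * GPM e d = 1 := by
  constructor
  · rw [GPM_mul_GPM, ← GPM_refl_zero, Equiv.self_trans_symm e]
    have : (fun i => d i + -d ((Equiv.symm e) (e i))) = (fun _ : Fin 3 => (0:ℤ)) := by
      funext i; simp
    rw [this]
  · rw [GPM_mul_GPM, ← GPM_refl_zero, Equiv.symm_trans_self e]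
    have : (fun i => -d ((Equiv.symm e) i) + d ((Equiv.symm e) i)) = (fun _ : Fin 3 => (0:ℤ)) := by
      funext i; simp
    rw [this]

lemma IsC_GPM_mul {Z : M3} (e : Equiv.Perm (Fin 3)) (d : Fin 3 → ℤ) (hZ : IsC Z) :
    IsC (GPM e d * Z) := by
  obtain ⟨π, hπ⟩ := hZ
  refine ⟨e.trans π, fun i j => ?_⟩
  rw [GPM_mul, zmax_mul_eq_zero]
  simp only [tz_ne_zero, false_or]
  exact hπ (e i) j

lemma IsC_Bt (t : ℤ) : IsC (Bt t) := by
  refine ⟨Equiv.addRight (2 : Fin 3), fun i j => ?_⟩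
  have htri : j = i ∨ j = i + 1 ∨ j = i + 2 := by revert i j; decide
  show Bt t i j = 0 ↔ j = i + 2
  unfold Bt
  rcases htri with h | h | h
  · subst h
    have h1 : ¬ (j = j + 2) := by revert j; decide
    simp [tz_ne_zero, h1]
  · subst h
    have h1 : ¬ (i + 1 = i) := by revert i; decide
    have h2 : ¬ (i + 1 = i + 2) := by revert i; decide
    simp [h1, tz_ne_zero, h2]
  · subst h
    have h1 : ¬ (i + 2 = i) := by revert i; decide
    have h2 : ¬ (i + 2 = i + 1) := by revert i; decide
    simp [h1, h2]

lemma mem_prod3 {a b : Fin 3} {s t : Finset (Fin 3)} (ha : a ∈ s) (hb : b ∈ t) :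
    (a, b) ∈ s ×ˢ t := Finset.mem_product.mpr ⟨ha, hb⟩

open Finset in
lemma primality (X Y : M3) (π : Equiv.Perm (Fin 3))
    (H : ∀ i j, ((X * Y) i j = 0 ↔ j = π i)) : IsGP X ∨ IsGP Y := by
  classical
  -- termwise structure
  have hterm : ∀ i k, X i k * Y k (π i) = 0 := by
    intro i k
    have h0 : (X * Y) i (π i) = 0 := (H i (π i)).mpr rfl
    rw [Matrix.mul_apply, Fin.sum_univ_three] at h0
    obtain ⟨h01, h2⟩ := zmax_add_eq_zero.mp h0
    obtain ⟨h0', h1⟩ := zmax_add_eq_zero.mp h01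
    have htri : k = 0 ∨ k = 1 ∨ k = 2 := by revert k; decide
    rcases htri with rfl | rfl | rfl <;> assumption
  have hwit : ∀ i j, j ≠ π i → ∃ k, X i k ≠ 0 ∧ Y k j ≠ 0 := by
    intro i j hj
    have h0 : (X * Y) i j ≠ 0 := fun h => hj ((H i j).mp h)
    rw [Matrix.mul_apply] at h0
    by_contra hc
    push_neg at hc
    apply h0
    apply Finset.sum_eq_zero
    intro k _
    rcases Classical.em (X i k = 0) with h | h
    · rw [h, zero_mul]
    · rw [hc k h, mul_zero]
  set P : Fin 3 → Finset (Fin 3) := fun k => univ.filter (fun i => X i k ≠ 0) with hP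
  set Q : Fin 3 → Finset (Fin 3) := fun k => univ.filter (fun j => Y k j ≠ 0) with hQ
  have hrect : ∀ k i j, i ∈ P k → j ∈ Q k → j ≠ π i := by
    intro k i j hi hj hji
    subst hji
    rcases zmax_mul_eq_zero.mp (hterm i k) with h | h
    · exact (mem_filter.mp hi).2 h
    · exact (mem_filter.mp hj).2 h
  have hPQ3 : ∀ k, (P k).card + (Q k).card ≤ 3 := by
    intro k
    have himg : (P k).image π ⊆ univ \ (Q k) := by
      intro j hj
      obtain ⟨i, hi, rfl⟩ := Finset.mem_image.mp hj
      refine Finset.mem_sdiff.mpr ⟨Finset.mem_univ _, fun hmem => ?_⟩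
      exact hrect k i (π i) hi hmem rfl
    have h1 : (P k).card = ((P k).image π).card :=
      (Finset.card_image_of_injective _ π.injective).symm
    have h2 : ((P k).image π).card ≤ (univ \ Q k).card := Finset.card_le_card himg
    have h3 : (univ \ Q k).card = 3 - (Q k).card := by
      rw [Finset.card_sdiff_of_subset (Finset.subset_univ _)]
      congr 1
    have h4 : (Q k).card ≤ 3 := by
      have := Finset.card_le_card (Finset.subset_univ (Q k))
      simpa using this
    omega
  -- edge set
  set E : Finset (Fin 3 × Fin 3) := univ.filter (fun p => p.2 ≠ π p.1) with hE
  have hEcard : E.card = 6 := by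
    have hfib := Finset.card_eq_sum_card_fiberwise
      (f := fun p : Fin 3 × Fin 3 => p.1) (s := E) (t := univ) (fun x _ => mem_univ _)
    have hfibeq : ∀ i : Fin 3,
        (E.filter (fun p => p.1 = i)) = ({i} : Finset (Fin 3)) ×ˢ (univ.erase (π i)) := by
      intro i
      ext ⟨a, b⟩
      simp only [hE, Finset.mem_filter, Finset.mem_univ, true_and, and_true,
        Finset.mem_product, Finset.mem_singleton, Finset.mem_erase]
      constructor
      · rintro ⟨hb, rfl⟩; exact ⟨rfl, hb⟩
      · rintro ⟨rfl, hb⟩; exact ⟨hb, rfl⟩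
    rw [hfib]
    have : ∀ i : Fin 3, (E.filter (fun p => p.1 = i)).card = 2 := by
      intro i
      rw [hfibeq i, Finset.card_product, Finset.card_singleton,
        Finset.card_erase_of_mem (mem_univ _)]
      simp
    rw [Fin.sum_univ_three, this 0, this 1, this 2]
  -- coverage
  have hcover : E ⊆ univ.biUnion (fun k => P k ×ˢ Q k) := by
    rintro ⟨i, j⟩ hp
    have hij : j ≠ π i := by
      have := Finset.mem_filter.mp hp
      exact this.2
    obtain ⟨k, hk1, hk2⟩ := hwit i j hij
    refine Finset.mem_biUnion.mpr ⟨k, mem_univ _, ?_⟩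
    refine Finset.mem_product.mpr ⟨?_, ?_⟩
    · exact Finset.mem_filter.mpr ⟨mem_univ _, hk1⟩
    · exact Finset.mem_filter.mpr ⟨mem_univ _, hk2⟩
  have hprod_le : ∀ k, (P k).card * (Q k).card ≤ 2 := by
    intro k
    have h := hPQ3 k
    have ha : (P k).card ≤ 3 := by omega
    interval_cases hh : (P k).card <;> omega
  have h6 : 6 ≤ ∑ k : Fin 3, (P k ×ˢ Q k).card := by
    calc (6 : ℕ) = E.card := hEcard.symm
    _ ≤ (univ.biUnion (fun k => P k ×ˢ Q k)).card := Finset.card_le_card hcover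
    _ ≤ ∑ k : Fin 3, (P k ×ˢ Q k).card := Finset.card_biUnion_le
  have hall2 : ∀ k, (P k).card * (Q k).card = 2 := by
    have e0 : (P 0 ×ˢ Q 0).card = (P 0).card * (Q 0).card := Finset.card_product _ _
    have e1 : (P 1 ×ˢ Q 1).card = (P 1).card * (Q 1).card := Finset.card_product _ _
    have e2 : (P 2 ×ˢ Q 2).card = (P 2).card * (Q 2).card := Finset.card_product _ _
    rw [Fin.sum_univ_three, e0, e1, e2] at h6
    have h0 := hprod_le 0; have h1 := hprod_le 1; have h2 := hprod_le 2
    intro k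
    have htri : k = 0 ∨ k = 1 ∨ k = 2 := by revert k; decide
    rcases htri with rfl | rfl | rfl <;> omega
  -- disjointness of rectangles
  have hdisj : ∀ k k', k ≠ k' → ∀ p, p ∈ (P k ×ˢ Q k) → p ∈ (P k' ×ˢ Q k') → False := by
    intro k k' hkk' p hp hp'
    have hcard2 : ∀ m : Fin 3, (P m ×ˢ Q m).card ≤ 2 := by
      intro m; rw [Finset.card_product]; exact hprod_le m
    have hinter : 1 ≤ ((P k ×ˢ Q k) ∩ (P k' ×ˢ Q k')).card :=
      Finset.card_pos.mpr ⟨p, Finset.mem_inter.mpr ⟨hp, hp'⟩⟩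
    have hcup : ((P k ×ˢ Q k) ∪ (P k' ×ˢ Q k')).card ≤ 3 := by
      have := Finset.card_union_add_card_inter (P k ×ˢ Q k) (P k' ×ˢ Q k')
      have := hcard2 k; have := hcard2 k'
      omega
    -- third index
    have third : ∀ a b : Fin 3, a ≠ b → ∃ m, m ≠ a ∧ m ≠ b := by decide
    obtain ⟨m, hm1, hm2⟩ := third k k' hkk'
    have hcovsub : E ⊆ ((P k ×ˢ Q k) ∪ (P k' ×ˢ Q k')) ∪ (P m ×ˢ Q m) := by
      intro x hx
      have hx2 := hcover hx
      obtain ⟨a, -, ha⟩ := Finset.mem_biUnion.mp hx2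
      have hthree : ∀ a b b' c : Fin 3, b ≠ b' → c ≠ b → c ≠ b' → (a = b ∨ a = b' ∨ a = c) := by
        decide
      have : a = k ∨ a = k' ∨ a = m := hthree a k k' m hkk' hm1 hm2
      rcases this with rfl | rfl | rfl
      · exact Finset.mem_union.mpr (Or.inl (Finset.mem_union.mpr (Or.inl ha)))
      · exact Finset.mem_union.mpr (Or.inl (Finset.mem_union.mpr (Or.inr ha)))
      · exact Finset.mem_union.mpr (Or.inr ha)
    have : (6:ℕ) ≤ 5 := by
      calc (6:ℕ) = E.card := hEcard.symm
      _ ≤ (((P k ×ˢ Q k) ∪ (P k' ×ˢ Q k')) ∪ (P m ×ˢ Q m)).card := Finset.card_le_card hcovsub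
      _ ≤ ((P k ×ˢ Q k) ∪ (P k' ×ˢ Q k')).card + (P m ×ˢ Q m).card := Finset.card_union_le _ _
      _ ≤ 3 + 2 := by
        have := hcard2 m; omega
      _ = 5 := rfl
    omega
  -- each k is row-type or col-type
  have htype : ∀ k, ((P k).card = 1 ∧ (Q k).card = 2) ∨ ((P k).card = 2 ∧ (Q k).card = 1) := by
    intro k
    have h2 := hall2 k
    have h3 := hPQ3 k
    have ha : (P k).card ≤ 3 := by omega
    interval_cases hh : (P k).card <;> omega
  -- structure of row-type and col-type middles
  have hQfull : ∀ k i1, P k = {i1} → (Q k).card = 2 → Q k = univ.erase (π i1) := by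
    intro k i1 hPk hQk
    have hsub : Q k ⊆ univ.erase (π i1) := by
      intro j hj
      refine Finset.mem_erase.mpr ⟨?_, mem_univ _⟩
      exact hrect k i1 j (by rw [hPk]; exact Finset.mem_singleton_self _) hj
    have hce : (univ.erase (π i1)).card = 2 := by
      rw [Finset.card_erase_of_mem (mem_univ _)]; simp
    exact Finset.eq_of_subset_of_card_le hsub (by omega)
  have hPfull : ∀ k j2, Q k = {j2} → (P k).card = 2 → P k = univ.erase (π.symm j2) := by
    intro k j2 hQk hPk
    have hsub : P k ⊆ univ.erase (π.symm j2) := by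
      intro i hi
      refine Finset.mem_erase.mpr ⟨?_, mem_univ _⟩
      intro hieq
      have hj2 : j2 ≠ π i := hrect k i j2 hi (by rw [hQk]; exact Finset.mem_singleton_self _)
      apply hj2
      rw [hieq, Equiv.apply_symm_apply]
    have hce : (univ.erase (π.symm j2)).card = 2 := by
      rw [Finset.card_erase_of_mem (mem_univ _)]; simp
    exact Finset.eq_of_subset_of_card_le hsub (by omega)
  -- mixing relation
  have hmix : ∀ k k', k ≠ k' → ∀ i1, P k = {i1} → (Q k).card = 2 →
      ∀ j2, Q k' = {j2} → (P k').card = 2 → π i1 = j2 := by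
    intro k k' hkk' i1 hPk hQk j2 hQk' hPk'
    by_contra hne
    have hQkf := hQfull k i1 hPk hQk
    have hPkf := hPfull k' j2 hQk' hPk'
    apply hdisj k k' hkk' (i1, j2)
    · refine mem_prod3 ?_ ?_
      · rw [hPk]; exact Finset.mem_singleton_self _
      · rw [hQkf]; exact Finset.mem_erase.mpr ⟨fun h => hne h.symm, mem_univ _⟩
    · refine mem_prod3 ?_ ?_
      · rw [hPkf]
        refine Finset.mem_erase.mpr ⟨?_, mem_univ _⟩
        intro hieq
        apply hne
        rw [hieq, Equiv.apply_symm_apply]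
      · rw [hQk']; exact Finset.mem_singleton_self _
  by_cases hrowall : ∀ k, (P k).card = 1
  · -- X is a generalized permutation
    left
    have hex : ∀ k, ∃ i, P k = {i} := fun k => Finset.card_eq_one.mp (hrowall k)
    choose e he using hex
    have hsurj : Function.Surjective e := by
      intro i
      have hne : π i + 1 ≠ π i := by
        have : ∀ a : Fin 3, a + 1 ≠ a := by decide
        exact this (π i)
      obtain ⟨k, hk1, -⟩ := hwit i (π i + 1) hne
      refine ⟨k, ?_⟩
      have : i ∈ P k := Finset.mem_filter.mpr ⟨mem_univ _, hk1⟩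
      rw [he k] at this
      exact (Finset.mem_singleton.mp this).symm
    have hinj : Function.Injective e := Finite.injective_iff_surjective.mpr hsurj
    let ε : Equiv.Perm (Fin 3) := Equiv.ofBijective e ⟨hinj, hsurj⟩
    have hεapp : ∀ k, ε k = e k := fun k => rfl
    have hmem : ∀ i j, X i j ≠ 0 ↔ i = e j := by
      intro i j
      constructor
      · intro hX
        have : i ∈ P j := Finset.mem_filter.mpr ⟨mem_univ _, hX⟩
        rw [he j] at this
        exact Finset.mem_singleton.mp this
      · intro hij
        have : i ∈ P j := by rw [he j, hij]; exact Finset.mem_singleton_self _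
        exact (Finset.mem_filter.mp this).2
    have hval : ∀ i : Fin 3, ∃ a : ℤ, X i (ε.symm i) = tz a := by
      intro i
      have h1 : X i (ε.symm i) ≠ 0 := by
        rw [hmem]
        have : e (ε.symm i) = ε (ε.symm i) := (hεapp _).symm
        rw [this, Equiv.apply_symm_apply]
      rcases zmax_eq_zero_or_tz (X i (ε.symm i)) with h | h
      · exact absurd h h1
      · exact h
    choose d hd using hval
    refine ⟨ε.symm, d, ?_⟩
    funext i j
    by_cases h : j = ε.symm i
    · rw [GPM, h]
      simp only [if_pos rfl]
      exact (h ▸ hd i)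
    · rw [GPM]
      simp only [if_neg h]
      by_contra hX
      have := (hmem i j).mp hX
      apply h
      have : ε j = i := by rw [hεapp, ← this]
      rw [← this, Equiv.symm_apply_apply]
  · -- Y is a generalized permutation
    right
    push_neg at hrowall
    obtain ⟨k2, hk2⟩ := hrowall
    have hk2t : (P k2).card = 2 ∧ (Q k2).card = 1 := by
      rcases htype k2 with h | h
      · exact absurd h.1 hk2
      · exact h
    have hcolall : ∀ k, (Q k).card = 1 := by
      intro k1
      by_contra hq
      have hk1t : (P k1).card = 1 ∧ (Q k1).card = 2 := by
        rcases htype k1 with h | h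
        · exact h
        · exact absurd h.2 hq
      have hkk : k1 ≠ k2 := by
        intro h; rw [h] at hk1t; omega
      obtain ⟨i1, hi1⟩ := Finset.card_eq_one.mp hk1t.1
      obtain ⟨j2, hj2⟩ := Finset.card_eq_one.mp hk2t.2
      have hrel12 := hmix k1 k2 hkk i1 hi1 hk1t.2 j2 hj2 hk2t.1
      have third : ∀ a b : Fin 3, a ≠ b → ∃ m, m ≠ a ∧ m ≠ b := by decide
      obtain ⟨k3, hk31, hk32⟩ := third k1 k2 hkk
      rcases htype k3 with h3 | h3
      · -- k3 row-type: same row as k1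
        obtain ⟨i3, hi3⟩ := Finset.card_eq_one.mp h3.1
        have hrel32 := hmix k3 k2 hk32 i3 hi3 h3.2 j2 hj2 hk2t.1
        have : i1 = i3 := π.injective (hrel12.trans hrel32.symm)
        subst this
        apply hdisj k1 k3 (fun h => hk31 h.symm) (i1, π i1 + 1)
        · refine mem_prod3 (by rw [hi1]; exact Finset.mem_singleton_self _) ?_
          rw [hQfull k1 i1 hi1 hk1t.2]
          refine Finset.mem_erase.mpr ⟨?_, mem_univ _⟩
          have : ∀ a : Fin 3, a + 1 ≠ a := by decide
          exact this (π i1)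
        · refine mem_prod3 (by rw [hi3]; exact Finset.mem_singleton_self _) ?_
          rw [hQfull k3 i1 hi3 h3.2]
          refine Finset.mem_erase.mpr ⟨?_, mem_univ _⟩
          have : ∀ a : Fin 3, a + 1 ≠ a := by decide
          exact this (π i1)
      · -- k3 col-type: same column as k2
        obtain ⟨j3, hj3⟩ := Finset.card_eq_one.mp h3.2
        have hrel13 := hmix k1 k3 (Ne.symm hk31) i1 hi1 hk1t.2 j3 hj3 h3.1
        have : j2 = j3 := hrel12.symm.trans hrel13
        subst this
        apply hdisj k2 k3 (fun h => hk32 h.symm) (π.symm j2 + 1, j2)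
        · refine mem_prod3 ?_ (by rw [hj2]; exact Finset.mem_singleton_self _)
          rw [hPfull k2 j2 hj2 hk2t.1]
          refine Finset.mem_erase.mpr ⟨?_, mem_univ _⟩
          have : ∀ a : Fin 3, a + 1 ≠ a := by decide
          exact this (π.symm j2)
        · refine mem_prod3 ?_ (by rw [hj3]; exact Finset.mem_singleton_self _)
          rw [hPfull k3 j2 hj3 h3.1]
          refine Finset.mem_erase.mpr ⟨?_, mem_univ _⟩
          have : ∀ a : Fin 3, a + 1 ≠ a := by decide
          exact this (π.symm j2)
    -- build GP for Y
    have hex : ∀ k, ∃ j, Q k = {j} := fun k => Finset.card_eq_one.mp (hcolall k)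
    choose f hf using hex
    have hsurj : Function.Surjective f := by
      intro j
      have hne : j ≠ π (π.symm j + 1) := by
        intro h
        have h2 : π.symm j = π.symm j + 1 := by
          conv_lhs => rw [h]
          rw [Equiv.symm_apply_apply]
        have : ∀ a : Fin 3, a + 1 ≠ a := by decide
        exact this (π.symm j) h2.symm
      obtain ⟨k, -, hk2'⟩ := hwit (π.symm j + 1) j hne
      refine ⟨k, ?_⟩
      have : j ∈ Q k := Finset.mem_filter.mpr ⟨mem_univ _, hk2'⟩
      rw [hf k] at this
      exact (Finset.mem_singleton.mp this).symm
    have hinj : Function.Injective f := Finite.injective_iff_surjective.mpr hsurj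
    let ε : Equiv.Perm (Fin 3) := Equiv.ofBijective f ⟨hinj, hsurj⟩
    have hεapp : ∀ k, ε k = f k := fun k => rfl
    have hmem : ∀ k j, Y k j ≠ 0 ↔ j = f k := by
      intro k j
      constructor
      · intro hY
        have : j ∈ Q k := Finset.mem_filter.mpr ⟨mem_univ _, hY⟩
        rw [hf k] at this
        exact Finset.mem_singleton.mp this
      · intro hij
        have : j ∈ Q k := by rw [hf k, hij]; exact Finset.mem_singleton_self _
        exact (Finset.mem_filter.mp this).2
    have hval : ∀ k : Fin 3, ∃ a : ℤ, Y k (f k) = tz a := by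
      intro k
      have h1 : Y k (f k) ≠ 0 := (hmem k (f k)).mpr rfl
      rcases zmax_eq_zero_or_tz (Y k (f k)) with h | h
      · exact absurd h h1
      · exact h
    choose d hd using hval
    refine ⟨ε, d, ?_⟩
    funext k j
    by_cases h : j = ε k
    · rw [GPM, h]
      simp only [if_pos rfl]
      rw [hεapp]
      exact hd k
    · rw [GPM]
      simp only [if_neg h]
      by_contra hY
      exact h (((hmem k j).mp hY).trans (hεapp k).symm)

lemma exists_third : ∀ a b : Fin 3, ∃ c, c ≠ a ∧ c ≠ b := by decide

lemma list_struct : ∀ (l : List M3), IsC l.prod →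
    ∃ g ∈ l, ∃ U V : M3, IsGP U ∧ IsGP V ∧ l.prod = U * g * V := by
  intro l
  induction l with
  | nil =>
    intro hC
    exfalso
    obtain ⟨π, hπ⟩ := hC
    simp only [List.prod_nil] at hπ
    obtain ⟨j, hj1, hj2⟩ := exists_third (0 : Fin 3) (π 0)
    have h0 : (1 : M3) 0 j = 0 := Matrix.one_apply_ne (Ne.symm hj1)
    exact hj2 ((hπ 0 j).mp h0)
  | cons g l ih =>
    intro hC
    rw [List.prod_cons] at hC ⊢
    obtain ⟨π, hπ⟩ := hC
    rcases primality g l.prod π hπ with hg | hW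
    · obtain ⟨e, d, rfl⟩ := hg
      have hinv := GPM_inv e d
      have hl : l.prod = GPM e.symm (fun j => -(d (e.symm j))) * (GPM e d * l.prod) := by
        rw [← mul_assoc, hinv.2, one_mul]
      have hC' : IsC l.prod := by
        rw [hl]; exact IsC_GPM_mul _ _ ⟨π, hπ⟩
      obtain ⟨h, hh, U, V, hU, hV, heq⟩ := ih hC'
      refine ⟨h, List.mem_cons_of_mem _ hh, GPM e d * U, V,
        IsGP_mul ⟨e, d, rfl⟩ hU, hV, ?_⟩
      rw [heq, ← mul_assoc, ← mul_assoc]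
    · refine ⟨g, List.mem_cons_self, 1, l.prod, IsGP_one, hW, ?_⟩
      rw [one_mul]

/-- absolute value of an entry (0 for -infinity) -/
noncomputable def absv (x : Zmax) : ℤ :=
  |(WithBot.unbotD 0 (OrderDual.ofDual (Tropical.untrop x)))|

lemma absv_nonneg (x : Zmax) : 0 ≤ absv x := abs_nonneg _

lemma absv_tz (a : ℤ) : absv (tz a) = |a| := by
  unfold absv tz
  rfl

noncomputable def Sg (g : M3) : ℤ := ∑ i : Fin 3, ∑ j : Fin 3, absv (g i j)

lemma Sg_nonneg (g : M3) : 0 ≤ Sg g :=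
  Finset.sum_nonneg fun i _ => Finset.sum_nonneg fun j _ => absv_nonneg _

lemma entry_le_Sg (g : M3) (i j : Fin 3) : absv (g i j) ≤ Sg g := by
  unfold Sg
  calc absv (g i j) ≤ ∑ j' : Fin 3, absv (g i j') :=
        Finset.single_le_sum (fun j' _ => absv_nonneg _) (Finset.mem_univ j)
  _ ≤ ∑ i' : Fin 3, ∑ j' : Fin 3, absv (g i' j') :=
        Finset.single_le_sum (fun i' _ => Finset.sum_nonneg fun j' _ => absv_nonneg _)
          (Finset.mem_univ i)

lemma sandwich_bound (g : M3) (t : ℤ) (U V : M3) (hU : IsGP U) (hV : IsGP V)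
    (heq : Bt t = U * g * V) : 3 * t ≤ 6 * Sg g := by
  obtain ⟨e, d, rfl⟩ := hU
  obtain ⟨f, c, rfl⟩ := hV
  have hent : ∀ i j : Fin 3,
      Bt t i j = tz (d i) * g (e i) (f.symm j) * tz (c (f.symm j)) := by
    intro i j
    rw [heq, mul_GPM, GPM_mul]
  have hx : ∀ i : Fin 3, ∃ x : ℤ, g (e i) (f.symm i) = tz x ∧ d i + x + c (f.symm i) = -t := by
    intro i
    have h1 := (hent i i).symm
    have h2 : Bt t i i = tz (-t) := by unfold Bt; simp
    rw [h2] at h1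
    rcases zmax_eq_zero_or_tz (g (e i) (f.symm i)) with h | ⟨x, hxx⟩
    · rw [h, mul_zero, zero_mul] at h1
      exact absurd h1.symm (tz_ne_zero _)
    · refine ⟨x, hxx, ?_⟩
      rw [hxx, tz_mul, tz_mul] at h1
      exact tz_injective h1
  have hy : ∀ i : Fin 3, ∃ y : ℤ,
      g (e i) (f.symm (i + 1)) = tz y ∧ d i + y + c (f.symm (i + 1)) = 0 := by
    intro i
    have h1 := (hent i (i + 1)).symm
    have h2 : Bt t i (i + 1) = tz 0 := by
      unfold Bt
      have hne : ¬ (i + 1 = i) := by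
        have : ∀ a : Fin 3, ¬ (a + 1 = a) := by decide
        exact this i
      simp [hne]
    rw [h2] at h1
    rcases zmax_eq_zero_or_tz (g (e i) (f.symm (i + 1))) with h | ⟨y, hyy⟩
    · rw [h, mul_zero, zero_mul] at h1
      exact absurd h1.symm (tz_ne_zero _)
    · refine ⟨y, hyy, ?_⟩
      rw [hyy, tz_mul, tz_mul] at h1
      exact tz_injective h1
  choose x hx1 hx2 using hx
  choose y hy1 hy2 using hy
  have hxb : ∀ i : Fin 3, |x i| ≤ Sg g := by
    intro i
    have : absv (g (e i) (f.symm i)) = |x i| := by rw [hx1 i, absv_tz]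
    rw [← this]
    exact entry_le_Sg g _ _
  have hyb : ∀ i : Fin 3, |y i| ≤ Sg g := by
    intro i
    have : absv (g (e i) (f.symm (i + 1))) = |y i| := by rw [hy1 i, absv_tz]
    rw [← this]
    exact entry_le_Sg g _ _
  have ex0 := hx2 0; have ex1 := hx2 1; have ex2 := hx2 2
  have ey0 := hy2 0; have ey1 := hy2 1; have ey2 := hy2 2
  have i01 : (0 : Fin 3) + 1 = 1 := rfl
  have i12 : (1 : Fin 3) + 1 = 2 := rfl
  have i20 : (2 : Fin 3) + 1 = 0 := rfl
  rw [i01] at ey0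
  rw [i12] at ey1
  rw [i20] at ey2
  have hb0 := abs_le.mp (hxb 0)
  have hb1 := abs_le.mp (hxb 1)
  have hb2 := abs_le.mp (hxb 2)
  have hc0 := abs_le.mp (hyb 0)
  have hc1 := abs_le.mp (hyb 1)
  have hc2 := abs_le.mp (hyb 2)
  linarith

/-- The monoid `M_3(ℤ_max)` is not finitely generated. -/
theorem stmt17 :
    ¬ ∃ G : Finset (Matrix (Fin 3) (Fin 3) Zmax),
        Submonoid.closure (G : Set (Matrix (Fin 3) (Fin 3) Zmax)) = ⊤ := by
  rintro ⟨G, hG⟩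
  classical
  set SG : ℤ := ∑ g ∈ G, Sg g with hSG
  have hSGnn : 0 ≤ SG := Finset.sum_nonneg fun g _ => Sg_nonneg g
  set t : ℤ := 2 * SG + 1 with ht
  have hmem : Bt t ∈ Submonoid.closure (G : Set M3) := by
    rw [hG]; exact Submonoid.mem_top _
  obtain ⟨l, hl, hlp⟩ := Submonoid.exists_list_of_mem_closure hmem
  have hC : IsC l.prod := by rw [hlp]; exact IsC_Bt t
  obtain ⟨g, hgl, U, V, hU, hV, heq⟩ := list_struct l hC
  rw [hlp] at heq
  have hb := sandwich_bound g t U V hU hV heq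
  have hgG : g ∈ G := hl g hgl
  have hSgle : Sg g ≤ SG := Finset.single_le_sum (fun g _ => Sg_nonneg g) hgG
  linarith
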